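/- Let p be a positive integer and q an integer with gcd(p,q) = 1, p/q ≠ 1. For any primitive integer triple (x,y,z) with -px = q(y+z), one has gcd(y, z+x) + gcd(z, x+y) ≤ 2|p| + 2|q|. -/

import Mathlib

/-- gcd is invariant under subtracting the first argument from the second. -/
lemma my_gcd_sub_self (a c : ℤ) : Int.gcd a (c - a) = Int.gcd a c := by
  apply Nat.dvd_antisymm
  · rw [← Int.natCast_dvd_natCast]
    refine Int.dvd_coe_gcd ((Int.gcd_dvd_left _ _)) ?_
    have h1 : (↑(Int.gcd a (c - a)) : ℤ) ∣ a := (Int.gcd_dvd_left _ _)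
    have h2 : (↑(Int.gcd a (c - a)) : ℤ) ∣ c - a := (Int.gcd_dvd_right _ _)
    have := dvd_add h2 h1
    simpa using this
  · rw [← Int.natCast_dvd_natCast]
    refine Int.dvd_coe_gcd ((Int.gcd_dvd_left _ _)) ?_
    exact dvd_sub (Int.gcd_dvd_right _ _) (Int.gcd_dvd_left _ _)

/-- Key bound: if gcd(a,k)=1 then gcd(a, m*k - a) ≤ |m| provided m ≠ 0. -/
lemma my_key (a k m : ℤ) (hcop : Int.gcd a k = 1) (hm : m ≠ 0) :
    Int.gcd a (m * k - a) ≤ m.natAbs := by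
  rw [my_gcd_sub_self]
  have : Int.gcd a (m * k) = Int.gcd a m := by
    unfold Int.gcd
    rw [Int.natAbs_mul]
    exact Nat.Coprime.gcd_mul_right_cancel_right _ (Nat.Coprime.symm hcop)
  rw [this]
  have hpos : 0 < m.natAbs := Int.natAbs_pos.mpr hm
  exact Nat.le_of_dvd hpos (Nat.gcd_dvd_right _ _)

theorem stmt_11 (p q : ℤ) (hp : 0 < p) (hpq : Int.gcd p q = 1)
    (hne : (p : ℚ) / (q : ℚ) ≠ 1)
    (x y z : ℤ) (hprim : Int.gcd (Int.gcd x y) z = 1)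
    (heq : -p * x = q * (y + z)) :
    Int.gcd y (z + x) + Int.gcd z (x + y) ≤ 2 * p.natAbs + 2 * q.natAbs := by
  have hp0 : p ≠ 0 := hp.ne'
  -- p divides y + z
  have hpdvd : p ∣ y + z := by
    have h1 : p ∣ q * (y + z) := ⟨-x, by linarith [heq]⟩
    exact (Int.isCoprime_iff_gcd_eq_one.mpr hpq).dvd_of_dvd_mul_left h1
  obtain ⟨k, hk⟩ := hpdvd
  have hx : x = -(q * k) := by
    have : p * x = p * (-(q * k)) := by rw [hk] at heq; ring_nf; ring_nf at heq; linarith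
    exact mul_left_cancel₀ hp0 this
  -- p ≠ q
  have hpq' : p - q ≠ 0 := by
    intro h
    have hq : q = p := by linarith
    have : p = 1 := by
      have := hpq
      rw [hq, Int.gcd_self] at this
      omega
    apply hne
    rw [hq, this]
    norm_num
  -- coprimality of y with k and z with k
  have hcom : ∀ a b : ℤ, a + b = y + z → Int.gcd (Int.gcd x a) b = 1 → Int.gcd a k = 1 := by
    intro a b hab hg
    have hd1 : (↑(Int.gcd a k) : ℤ) ∣ a := (Int.gcd_dvd_left _ _)
    have hd2 : (↑(Int.gcd a k) : ℤ) ∣ k := (Int.gcd_dvd_right _ _)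
    have hdx : (↑(Int.gcd a k) : ℤ) ∣ x := by rw [hx]; exact dvd_neg.mpr (hd2.mul_left q)
    have hdb : (↑(Int.gcd a k) : ℤ) ∣ b := by
      have : b = p * k - a := by rw [← hk, ← hab]; ring
      rw [this]
      exact dvd_sub (hd2.mul_left p) hd1
    have : (↑(Int.gcd a k) : ℤ) ∣ (↑(Int.gcd (Int.gcd x a) b) : ℤ) :=
      Int.dvd_coe_gcd (Int.dvd_coe_gcd hdx hd1) hdb
    rw [hg] at this
    have : Int.gcd a k ∣ 1 := by exact_mod_cast this
    exact Nat.dvd_one.mp this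
  have hyk : Int.gcd y k = 1 := hcom y z rfl hprim
  have hzk : Int.gcd z k = 1 := by
    apply hcom z y (by ring)
    rw [Int.gcd_assoc, Int.gcd_comm z y, ← Int.gcd_assoc]
    exact hprim
  have h1 : Int.gcd y (z + x) ≤ (p - q).natAbs := by
    have hzx : z + x = (p - q) * k - y := by
      have hz : z = p * k - y := by rw [← hk]; ring
      rw [hz, hx]; ring
    rw [hzx]
    exact my_key y k (p - q) hyk hpq'
  have h2 : Int.gcd z (x + y) ≤ (p - q).natAbs := by
    have hxy : x + y = (p - q) * k - z := by
      have hy : y = p * k - z := by rw [← hk]; ring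
      rw [hy, hx]; ring
    rw [hxy]
    exact my_key z k (p - q) hzk hpq'
  have h3 : (p - q).natAbs ≤ p.natAbs + q.natAbs := Int.natAbs_sub_le p q
  omega
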